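/- Let I be a two-sided *-ideal of the *-algebra Γ^∞ (the span in B(ℓ²) of all operators diag(α)U_f with α ∈ ℓ^∞ and f a partial injection of ℕ). For T = diag(α)U_f, one has T ∈ I if and only if |T| = (T*T)^{1/2} ∈ I. Moreover |T| = diag(|f†_*(α)|) and the partial isometry V in the polar decomposition T = V|T| lies in Γ^∞, namely V = diag(ν_α)U_f with ν_α(n) = α(n)/|α(n)| if α(n) ≠ 0 and 0 otherwise. -/

import Mathlib

open Classical

noncomputable section

/-- The inverse monoid `emb` of partial injections of `ℕ`, modelled as functions
`ℕ → Option ℕ` that are injective where defined. -/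
def PInj : Type :=
  {f : ℕ → Option ℕ // ∀ ⦃a b c : ℕ⦄, f a = some c → f b = some c → a = b}

/-- Composition of partial injections: `(f.comp g) n = f (g n)`. -/
def PInj.comp (f g : PInj) : PInj :=
  ⟨fun n => (g.1 n).bind f.1, by
    intro a b c ha hb
    rw [Option.bind_eq_some_iff] at ha hb
    obtain ⟨x, hgx, hfx⟩ := ha
    obtain ⟨y, hgy, hfy⟩ := hb
    cases f.2 hfx hfy
    exact g.2 hgx hgy⟩

/-- The antipode `f†`, with domain `ran f`, sending `f n` back to `n`. -/
def PInj.dag (f : PInj) : PInj :=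
  ⟨fun n => if h : ∃ m, f.1 m = some n then some h.choose else none, by
    intro a b c ha hb
    dsimp only at ha hb
    have h1 : ∃ m, f.1 m = some a := by
      by_contra h; rw [dif_neg h] at ha; exact absurd ha (by simp)
    have h2 : ∃ m, f.1 m = some b := by
      by_contra h; rw [dif_neg h] at hb; exact absurd hb (by simp)
    rw [dif_pos h1] at ha
    rw [dif_pos h2] at hb
    have e1 : f.1 c = some a := (Option.some_inj.mp ha) ▸ h1.choose_spec
    have e2 : f.1 c = some b := (Option.some_inj.mp hb) ▸ h2.choose_spec
    exact Option.some_inj.mp (e1.symm.trans e2)⟩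

/-- The partial identity `P_A` on a subset `A ⊆ ℕ`. -/
def PInj.pid (A : Set ℕ) : PInj :=
  ⟨fun n => if n ∈ A then some n else none, by
    intro a b c ha hb
    dsimp only at ha hb
    by_cases h1 : a ∈ A
    · by_cases h2 : b ∈ A
      · rw [if_pos h1] at ha; rw [if_pos h2] at hb
        exact (Option.some_inj.mp ha).trans (Option.some_inj.mp hb).symm
      · rw [if_neg h2] at hb; exact absurd hb (by simp)
    · rw [if_neg h1] at ha; exact absurd ha (by simp)⟩

/-- Domain of a partial injection. -/
def PInj.dom (f : PInj) : Set ℕ := {n | ∃ m, f.1 n = some m}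

/-- Range of a partial injection. -/
def PInj.ran (f : PInj) : Set ℕ := {n | ∃ m, f.1 m = some n}

/-- The action of a partial injection on sequences:
`(f_* α)_n = α_{f†(n)}` if `n ∈ ran f`, and `0` otherwise. -/
def fStar (f : PInj) (α : ℕ → ℂ) : ℕ → ℂ :=
  fun n => if h : ∃ m, f.1 m = some n then α h.choose else 0

/-- `ℓ²(ℕ, ℂ)`. -/
abbrev H2 : Type := lp (fun _ : ℕ => ℂ) 2

/-- The shift operator `U_f` on `ℓ²(ℕ, ℂ)`. -/
def Uop (f : PInj) (ξ : H2) : H2 :=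
  if h : (fun m => if hm : ∃ n, f.1 n = some m then ξ.1 hm.choose else 0) ∈
      lp (fun _ : ℕ => ℂ) 2 then ⟨_, h⟩ else 0

/-- The diagonal operator `diag(α)` on `ℓ²(ℕ, ℂ)`. -/
def diagOp (α : ℕ → ℂ) (ξ : H2) : H2 :=
  if h : (fun n => α n * ξ.1 n) ∈ lp (fun _ : ℕ => ℂ) 2 then ⟨_, h⟩ else 0

/-- A sequence is bounded (belongs to `ℓ^∞`). -/
def Bdd (α : ℕ → ℂ) : Prop := ∃ C, ∀ n, ‖α n‖ ≤ C

/-- The algebra `Γ^∞ ⊆ B(ℓ²)`: the span of the operators `diag(α) U_f` with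
`α ∈ ℓ^∞` and `f` a partial injection. -/
def GamInf : Set (H2 → H2) :=
  {T | ∃ (n : ℕ) (α : Fin n → (ℕ → ℂ)) (f : Fin n → PInj),
    (∀ t, Bdd (α t)) ∧ T = ∑ t, (diagOp (α t)) ∘ (Uop (f t))}

/-! ### Auxiliary lemmas -/

lemma dag_some (f : PInj) {m n : ℕ} : f.dag.1 n = some m ↔ f.1 m = some n := by
  constructor
  · intro h
    dsimp only [PInj.dag] at h
    by_cases hex : ∃ k, f.1 k = some n
    · rw [dif_pos hex] at h
      cases Option.some_inj.mp h
      exact hex.choose_spec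
    · rw [dif_neg hex] at h; exact absurd h (by simp)
  · intro h
    have hex : ∃ k, f.1 k = some n := ⟨m, h⟩
    dsimp only [PInj.dag]
    rw [dif_pos hex]
    exact congrArg some (f.2 hex.choose_spec h)

lemma fStar_eq_of (f : PInj) (ξ : ℕ → ℂ) {n m : ℕ} (h : f.1 n = some m) :
    fStar f ξ m = ξ n := by
  have hm : ∃ k, f.1 k = some m := ⟨n, h⟩
  rw [fStar, dif_pos hm]
  exact congrArg ξ (f.2 hm.choose_spec h)

lemma fStar_eq_zero (f : PInj) (ξ : ℕ → ℂ) {m : ℕ} (h : ¬ ∃ n, f.1 n = some m) :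
    fStar f ξ m = 0 := by
  rw [fStar, dif_neg h]

lemma fStar_dag_of (f : PInj) (α : ℕ → ℂ) {n m : ℕ} (h : f.1 n = some m) :
    fStar f.dag α n = α m :=
  fStar_eq_of f.dag α ((dag_some f).mpr h)

lemma fStar_dag_none (f : PInj) (α : ℕ → ℂ) {n : ℕ} (h : f.1 n = none) :
    fStar f.dag α n = 0 := by
  apply fStar_eq_zero
  rintro ⟨m, hm⟩
  rw [(dag_some f).mp hm] at h
  exact absurd h (by simp)

lemma memℓp_two_iff (g : ℕ → ℂ) :
    g ∈ lp (fun _ : ℕ => ℂ) 2 ↔ Summable (fun n => ‖g n‖ ^ (2 : ℕ)) := by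
  change Memℓp g 2 ↔ _
  rw [memℓp_gen_iff (by norm_num)]
  exact summable_congr fun n => by
    rw [ENNReal.toReal_ofNat, show ((2 : ℝ)) = ((2 : ℕ) : ℝ) by norm_num,
      Real.rpow_natCast]

lemma fStar_summable (f : PInj) (ξ : ℕ → ℂ)
    (hξ : Summable fun n => ‖ξ n‖ ^ (2 : ℕ)) :
    Summable fun m => ‖fStar f ξ m‖ ^ (2 : ℕ) := by
  classical
  apply summable_of_sum_range_le (c := ∑' n, ‖ξ n‖ ^ (2 : ℕ))
    (fun m => by positivity)
  intro N
  rw [← Finset.sum_filter_of_ne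
    (p := fun m => ∃ n, f.1 n = some m)
    (fun m _ hne => by
      by_contra hex
      exact hne (by rw [fStar_eq_zero f ξ hex]; simp))]
  set s : Finset ℕ := (Finset.range N).filter (fun m => ∃ n, f.1 n = some m) with hs
  set g : ℕ → ℕ := fun m => if h : ∃ n, f.1 n = some m then h.choose else 0 with hg
  have hgs : ∀ m, (h : ∃ n, f.1 n = some m) → f.1 (g m) = some m := by
    intro m h
    rw [hg]; dsimp only; rw [dif_pos h]; exact h.choose_spec
  have hval : ∀ m ∈ s, ‖fStar f ξ m‖ ^ (2 : ℕ) = ‖ξ (g m)‖ ^ (2 : ℕ) := by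
    intro m hm
    have h : ∃ n, f.1 n = some m := (Finset.mem_filter.mp hm).2
    rw [fStar_eq_of f ξ (hgs m h)]
  rw [Finset.sum_congr rfl hval]
  have hinj : ∀ x ∈ s, ∀ y ∈ s, g x = g y → x = y := by
    intro x hx y hy hxy
    have h1 := hgs x (Finset.mem_filter.mp hx).2
    have h2 := hgs y (Finset.mem_filter.mp hy).2
    rw [hxy] at h1
    exact Option.some_inj.mp (h1.symm.trans h2)
  calc ∑ x ∈ s, ‖ξ (g x)‖ ^ (2 : ℕ)
      = ∑ k ∈ Finset.image g s, ‖ξ k‖ ^ (2 : ℕ) := (Finset.sum_image (f := fun k => ‖ξ k‖ ^ (2 : ℕ)) hinj).symm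
    _ ≤ _ := hξ.sum_le_tsum _ (fun k _ => by positivity)

lemma Uop_coe (f : PInj) (ξ : H2) : (Uop f ξ).1 = fStar f ξ.1 := by
  have hmem : (fun m => if hm : ∃ n, f.1 n = some m then ξ.1 hm.choose else 0) ∈
      lp (fun _ : ℕ => ℂ) 2 :=
    (memℓp_two_iff _).mpr (fStar_summable f ξ.1 ((memℓp_two_iff _).mp ξ.2))
  rw [Uop, dif_pos hmem]
  rfl

lemma diag_mem {α : ℕ → ℂ} (hα : Bdd α) (ξ : H2) :
    (fun n => α n * ξ.1 n) ∈ lp (fun _ : ℕ => ℂ) 2 := by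
  obtain ⟨C, hC⟩ := hα
  rw [memℓp_two_iff]
  refine Summable.of_nonneg_of_le (fun n => by positivity) (fun n => ?_)
    (((memℓp_two_iff _).mp ξ.2).mul_left (C ^ 2))
  have h1 : ‖α n‖ ≤ C := by exact hC n
  have h2 : (0 : ℝ) ≤ ‖ξ.1 n‖ := norm_nonneg _
  have h3 : (0 : ℝ) ≤ ‖α n‖ := norm_nonneg _
  rw [norm_mul, mul_pow]
  have h4 : ‖α n‖ ^ 2 ≤ C ^ 2 := by nlinarith
  exact mul_le_mul_of_nonneg_right h4 (by positivity)

lemma diag_coe {α : ℕ → ℂ} (hα : Bdd α) (ξ : H2) :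
    (diagOp α ξ).1 = fun n => α n * ξ.1 n := by
  rw [diagOp, dif_pos (diag_mem hα ξ)]

lemma Bdd.fStar' {α : ℕ → ℂ} (hα : Bdd α) (f : PInj) : Bdd (fStar f α) := by
  obtain ⟨C, hC⟩ := hα
  refine ⟨max C 0, fun n => ?_⟩
  rw [fStar]
  split
  · exact le_max_of_le_left (hC _)
  · simp

lemma Bdd.mul {α β : ℕ → ℂ} (hα : Bdd α) (hβ : Bdd β) :
    Bdd (fun n => α n * β n) := by
  obtain ⟨C, hC⟩ := hα
  obtain ⟨D, hD⟩ := hβ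
  refine ⟨(max C 0) * max D 0, fun n => ?_⟩
  dsimp only
  rw [norm_mul]
  exact mul_le_mul (le_max_of_le_left (hC n)) (le_max_of_le_left (hD n))
    (norm_nonneg _) (le_max_right _ _)

lemma Bdd.conj' {α : ℕ → ℂ} (hα : Bdd α) :
    Bdd (fun n => (starRingEnd ℂ) (α n)) := by
  obtain ⟨C, hC⟩ := hα
  exact ⟨C, fun n => by
    show ‖(starRingEnd ℂ) (α n)‖ ≤ C
    rw [Complex.norm_conj]; exact hC n⟩

lemma Bdd_nu (α : ℕ → ℂ) :
    Bdd (fun n => if α n = 0 then 0 else α n / ‖α n‖) := by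
  refine ⟨1, fun n => ?_⟩
  dsimp only
  split
  · simp
  · next h =>
    rw [norm_div, Complex.norm_real, norm_norm,
      div_self (norm_ne_zero_iff.mpr h)]

lemma Bdd_absC (α : ℕ → ℂ) (hα : Bdd α) :
    Bdd (fun n => ((‖α n‖ : ℝ) : ℂ)) := by
  obtain ⟨C, hC⟩ := hα
  exact ⟨C, fun n => by
    show ‖((‖α n‖ : ℝ) : ℂ)‖ ≤ C
    rw [Complex.norm_real, norm_norm]; exact hC n⟩

/-- The key composition formula:
`diag(f†_* β) U_{f†} ∘ diag(α) U_f = diag((f†_* β) · (f†_* α))`. -/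
lemma comp_formula (f : PInj) (α β : ℕ → ℂ) (hα : Bdd α) (hβ : Bdd β) :
    (diagOp (fStar f.dag β) ∘ Uop f.dag) ∘ (diagOp α ∘ Uop f) =
      diagOp (fun n => fStar f.dag β n * fStar f.dag α n) := by
  funext ξ
  apply Subtype.ext
  rw [Function.comp_apply, Function.comp_apply, Function.comp_apply,
    diag_coe (hβ.fStar' f.dag), Uop_coe, diag_coe hα, Uop_coe,
    diag_coe ((hβ.fStar' f.dag).mul (hα.fStar' f.dag))]
  funext n
  beta_reduce
  cases hfn : f.1 n with
  | none =>
    rw [fStar_dag_none f β hfn, fStar_dag_none f α hfn]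
    ring
  | some m =>
    rw [fStar_dag_of f β hfn, fStar_dag_of f α hfn,
      fStar_eq_of f.dag _ ((dag_some f).mpr hfn)]
    beta_reduce
    rw [fStar_eq_of f (ξ.1 : ℕ → ℂ) hfn]
    ring

lemma nu_mul_abs (z : ℂ) :
    (if z = 0 then 0 else z / ‖z‖) * ((‖z‖ : ℝ) : ℂ) = z := by
  split
  · next h => rw [h]; simp
  · next h =>
    have hz : ((‖z‖ : ℝ) : ℂ) ≠ 0 := by
      simpa using norm_ne_zero_iff.mpr h
    field_simp

lemma conj_nu_mul (z : ℂ) :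
    (starRingEnd ℂ) (if z = 0 then 0 else z / ‖z‖) * z =
      ((‖z‖ : ℝ) : ℂ) := by
  split
  · next h => rw [h]; simp
  · next h =>
    have hz : ((‖z‖ : ℝ) : ℂ) ≠ 0 := by
      simpa using norm_ne_zero_iff.mpr h
    rw [map_div₀, Complex.conj_ofReal, div_mul_eq_mul_div,
      ← Complex.normSq_eq_conj_mul_self, ← Complex.sq_norm]
    push_cast
    field_simp

/-- Let `I` be a two-sided *-ideal of `Γ^∞` and `T = diag(α) U_f`
with `α` bounded. Then `T ∈ I ↔ |T| ∈ I`, where `|T| = diag(|f†_*(α)|)`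
(indeed `T* T = diag(|f†_*(α)|²)`), and the polar decomposition `T = V |T|`
has `V = diag(ν_α) U_f ∈ Γ^∞`, `ν_α(n) = α(n)/|α(n)|` if `α(n) ≠ 0`, else `0`. -/
theorem stmt10 (I : Set (H2 → H2))
    (hsub : I ⊆ GamInf)
    (hadd : ∀ S T, S ∈ I → T ∈ I → S + T ∈ I)
    (hmul : ∀ S T, S ∈ GamInf → T ∈ I → S ∘ T ∈ I ∧ T ∘ S ∈ I)
    (hstar : ∀ (α : ℕ → ℂ) (f : PInj), Bdd α →
      (diagOp α ∘ Uop f) ∈ I →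
      (diagOp (fStar (PInj.dag f) (fun n => (starRingEnd ℂ) (α n))) ∘
        Uop (PInj.dag f)) ∈ I)
    (α : ℕ → ℂ) (hα : Bdd α) (f : PInj) :
    (((diagOp α ∘ Uop f) ∈ I) ↔
      diagOp (fun n => ((‖fStar (PInj.dag f) α n‖ : ℝ) : ℂ)) ∈ I) ∧
    ((diagOp (fStar (PInj.dag f) (fun n => (starRingEnd ℂ) (α n))) ∘
        Uop (PInj.dag f)) ∘ (diagOp α ∘ Uop f) =
      diagOp (fun n => ((‖fStar (PInj.dag f) α n‖ ^ 2 : ℝ) : ℂ))) ∧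
    (diagOp α ∘ Uop f =
      ((diagOp (fun n => if α n = 0 then 0 else α n / ‖α n‖) ∘ Uop f) ∘
        diagOp (fun n => ((‖fStar (PInj.dag f) α n‖ : ℝ) : ℂ)))) ∧
    (diagOp (fun n => if α n = 0 then 0 else α n / ‖α n‖) ∘ Uop f)
      ∈ GamInf := by
  set ν : ℕ → ℂ := fun n => if α n = 0 then 0 else α n / ‖α n‖ with hν
  set γ : ℕ → ℂ := fun n => ((‖fStar (PInj.dag f) α n‖ : ℝ) : ℂ) with hγ
  have hνB : Bdd ν := Bdd_nu α
  have hγB : Bdd γ := Bdd_absC _ (hα.fStar' f.dag)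
  -- Part 2 : T* T = diag(|f†_* α|²)
  have part2 : (diagOp (fStar (PInj.dag f) (fun n => (starRingEnd ℂ) (α n))) ∘
        Uop (PInj.dag f)) ∘ (diagOp α ∘ Uop f) =
      diagOp (fun n => ((‖fStar (PInj.dag f) α n‖ ^ 2 : ℝ) : ℂ)) := by
    rw [comp_formula f α _ hα hα.conj']
    refine congrArg diagOp (funext fun n => ?_)
    beta_reduce
    cases hfn : f.1 n with
    | none =>
      rw [fStar_dag_none f _ hfn, fStar_dag_none f α hfn]
      simp
    | some m =>
      rw [fStar_dag_of f _ hfn, fStar_dag_of f α hfn]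
      beta_reduce
      rw [← Complex.normSq_eq_conj_mul_self, ← Complex.sq_norm]
  -- Part 3 : T = V |T|
  have part3 : diagOp α ∘ Uop f = ((diagOp ν ∘ Uop f) ∘ diagOp γ) := by
    funext ξ
    apply Subtype.ext
    rw [Function.comp_apply, Function.comp_apply, Function.comp_apply,
      diag_coe hα, Uop_coe, diag_coe hνB, Uop_coe, diag_coe hγB]
    funext n
    beta_reduce
    by_cases hex : ∃ m, f.1 m = some n
    · obtain ⟨m, hm⟩ := hex
      rw [fStar_eq_of f (ξ.1 : ℕ → ℂ) hm, fStar_eq_of f _ hm]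
      beta_reduce
      have hγm : γ m = ((‖α n‖ : ℝ) : ℂ) := by
        simp only [hγ]
        rw [fStar_dag_of f α hm]
      rw [hγm]
      simp only [hν]
      linear_combination (-ξ.1 m) * nu_mul_abs (α n)
    · rw [fStar_eq_zero f (ξ.1 : ℕ → ℂ) hex, fStar_eq_zero f _ hex]
      ring
  -- Part 4 : V ∈ Γ^∞
  have part4 : (diagOp ν ∘ Uop f) ∈ GamInf :=
    ⟨1, fun _ => ν, fun _ => f, fun _ => hνB, by rw [Fin.sum_univ_one]⟩
  -- |T| = V* T
  have habs : (diagOp (fStar f.dag (fun n => (starRingEnd ℂ) (ν n))) ∘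
        Uop f.dag) ∘ (diagOp α ∘ Uop f) = diagOp γ := by
    rw [comp_formula f α _ hα hνB.conj']
    refine congrArg diagOp (funext fun n => ?_)
    beta_reduce
    cases hfn : f.1 n with
    | none =>
      rw [fStar_dag_none f _ hfn, fStar_dag_none f α hfn]
      simp [hγ, fStar_dag_none f α hfn]
    | some m =>
      rw [fStar_dag_of f _ hfn, fStar_dag_of f α hfn]
      beta_reduce
      simp only [hγ, hν]
      rw [fStar_dag_of f α hfn]
      exact conj_nu_mul (α m)
  have hVstargam : (diagOp (fStar f.dag (fun n => (starRingEnd ℂ) (ν n))) ∘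
      Uop f.dag) ∈ GamInf :=
    ⟨1, fun _ => fStar f.dag (fun n => (starRingEnd ℂ) (ν n)), fun _ => f.dag,
      fun _ => (hνB.conj').fStar' f.dag, by rw [Fin.sum_univ_one]⟩
  refine ⟨⟨fun hT => ?_, fun hT => ?_⟩, part2, part3, part4⟩
  · rw [← habs]
    exact (hmul _ _ hVstargam hT).1
  · rw [part3]
    exact (hmul _ _ part4 hT).1
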